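/- Let M be an s × s upper-triangular row-stochastic real matrix with M_{ss} = 1 and M_{ii} < 1 for i < s. Then the matrix M - 𝟙 e_s^T - I is invertible, and the expected absorption time starting from state 1, namely ∑_{r=1}^∞ r((M^r)_{1s} - (M^{r-1})_{1s}), equals ((M - 𝟙 e_s^T - I)^{-1})_{1s} + 1, where 𝟙 = (1,…,1)^T and e_s = (0,…,0,1)^T. -/

import Mathlib

open Finset Filter

namespace Stmt17Aux

variable {s : ℕ} {M : Matrix (Fin (s + 1)) (Fin (s + 1)) ℝ}

lemma matpow_nonneg (hnonneg : ∀ i j, 0 ≤ M i j) :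
    ∀ (r : ℕ) (i j), 0 ≤ (M ^ r) i j := by
  intro r
  induction r with
  | zero =>
    intro i j
    simp only [pow_zero, Matrix.one_apply]
    split <;> norm_num
  | succ r ih =>
    intro i j
    rw [pow_succ, Matrix.mul_apply]
    exact Finset.sum_nonneg fun k _ => mul_nonneg (ih i k) (hnonneg k j)

lemma matpow_tri (htri : ∀ i j, j < i → M i j = 0) :
    ∀ (r : ℕ) (i j), j < i → (M ^ r) i j = 0 := by
  intro r
  induction r with
  | zero =>
    intro i j hij
    simp only [pow_zero, Matrix.one_apply]
    rw [if_neg (ne_of_gt hij)]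
  | succ r ih =>
    intro i j hij
    rw [pow_succ, Matrix.mul_apply]
    apply Finset.sum_eq_zero
    intro k _
    by_cases hk : k < i
    · rw [ih i k hk, zero_mul]
    · rw [htri k j (lt_of_lt_of_le hij (not_lt.mp hk)), mul_zero]

lemma matpow_row (hrow : ∀ i, ∑ j, M i j = 1) :
    ∀ (r : ℕ) (i), ∑ j, (M ^ r) i j = 1 := by
  intro r
  induction r with
  | zero => intro i; simp [Matrix.one_apply]
  | succ r ih =>
    intro i
    simp only [pow_succ, Matrix.mul_apply]
    rw [Finset.sum_comm]
    calc ∑ k, ∑ j, (M ^ r) i k * M k j = ∑ k, (M ^ r) i k * ∑ j, M k j := by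
          simp [Finset.mul_sum]
      _ = 1 := by simp only [hrow, mul_one]; exact ih i

lemma entry_le_one (hnonneg : ∀ i j, 0 ≤ M i j) (hrow : ∀ i, ∑ j, M i j = 1)
    (i j : Fin (s + 1)) : M i j ≤ 1 := by
  rw [← hrow i]
  exact Finset.single_le_sum (fun k _ => hnonneg i k) (Finset.mem_univ j)


lemma colbound (htri : ∀ i j, j < i → M i j = 0) (hnonneg : ∀ i j, 0 ≤ M i j)
    (hrow : ∀ i, ∑ j, M i j = 1) (hdiag : ∀ i, i < Fin.last s → M i i < 1) :
    ∃ c2 : ℝ, 0 ≤ c2 ∧ c2 < 1 ∧ ∃ K : ℝ, 0 ≤ K ∧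
      ∀ (i : Fin (s + 1)) (r : ℕ) (j : Fin (s + 1)), j ≠ Fin.last s →
        (M ^ r) i j ≤ K * c2 ^ r := by
  classical
  set L := Fin.last s with hLdef
  set f : Fin (s + 1) → ℝ := fun i => if i = L then (1/2 : ℝ) else max (M i i) 0 with hfdef
  set c : ℝ := Finset.univ.sup' Finset.univ_nonempty f with hcdef
  have hfc : ∀ i, f i ≤ c := fun i => Finset.le_sup' f (Finset.mem_univ i)
  have hc0 : (0 : ℝ) ≤ c := by
    refine le_trans ?_ (hfc L)
    simp [hfdef]
  have hc1 : c < 1 := by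
    rw [hcdef]
    rw [Finset.sup'_lt_iff]
    intro i _
    by_cases hi : i = L
    · simp [hfdef, hi]; norm_num
    · simp only [hfdef, if_neg hi]
      exact max_lt (hdiag i (Fin.lt_last_iff_ne_last.mpr hi)) one_pos
  have hcd : ∀ i, i ≠ L → M i i ≤ c := fun i hi => by
    refine le_trans ?_ (hfc i)
    simp [hfdef, hi, le_max_left]
  set c2 : ℝ := (1 + c) / 2 with hc2def
  have hc20 : (0 : ℝ) ≤ c2 := by rw [hc2def]; linarith
  have hc21 : c2 < 1 := by rw [hc2def]; linarith
  have hcc2 : c < c2 := by rw [hc2def]; linarith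
  have hsub : (0 : ℝ) < c2 - c := by linarith
  -- the inductive step
  have step : ∀ j : Fin (s + 1), j ≠ L →
      (∀ k : Fin (s + 1), (k : ℕ) < (j : ℕ) →
        ∃ C, 0 ≤ C ∧ ∀ i r, (M ^ r) i k ≤ C * c2 ^ r) →
      ∃ C, 0 ≤ C ∧ ∀ i r, (M ^ r) i j ≤ C * c2 ^ r := by
    intro j hj hIH
    have hex : ∀ k : Fin (s + 1), ∃ C : ℝ, 0 ≤ C ∧
        ((k : ℕ) < (j : ℕ) → ∀ i r, (M ^ r) i k ≤ C * c2 ^ r) := by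
      intro k
      by_cases hk : (k : ℕ) < (j : ℕ)
      · obtain ⟨C, hC0, hC⟩ := hIH k hk
        exact ⟨C, hC0, fun _ => hC⟩
      · exact ⟨0, le_refl 0, fun h => absurd h hk⟩
    choose fc hfc0 hfcb using hex
    set D : ℝ := ∑ k, fc k with hDdef
    have hD0 : 0 ≤ D := Finset.sum_nonneg fun k _ => hfc0 k
    have hfD : ∀ k, fc k ≤ D := fun k =>
      Finset.single_le_sum (fun k _ => hfc0 k) (Finset.mem_univ k)
    set D' : ℝ := (s + 1) * D with hD'def
    have hD'0 : 0 ≤ D' := mul_nonneg (by positivity) hD0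
    have hrec : ∀ i r, (M ^ (r + 1)) i j ≤ c * (M ^ r) i j + D' * c2 ^ r := by
      intro i r
      have hmul : (M ^ (r + 1)) i j = ∑ k, (M ^ r) i k * M k j := by
        rw [pow_succ, Matrix.mul_apply]
      rw [hmul, ← Finset.add_sum_erase _ _ (Finset.mem_univ j)]
      have h1 : (M ^ r) i j * M j j ≤ c * (M ^ r) i j := by
        rw [mul_comm]
        exact mul_le_mul_of_nonneg_right (hcd j hj) (matpow_nonneg hnonneg r i j)
      have hterm : ∀ k ∈ Finset.univ.erase j, (M ^ r) i k * M k j ≤ D * c2 ^ r := by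
        intro k hk
        have hkj : k ≠ j := Finset.ne_of_mem_erase hk
        rcases lt_trichotomy (k : ℕ) (j : ℕ) with h | h | h
        · have hb1 : (M ^ r) i k * M k j ≤ (fc k * c2 ^ r) * 1 :=
            mul_le_mul (hfcb k h i r) (entry_le_one hnonneg hrow k j) (hnonneg k j)
              (mul_nonneg (hfc0 k) (pow_nonneg hc20 r))
          have hb2 : fc k * c2 ^ r ≤ D * c2 ^ r :=
            mul_le_mul_of_nonneg_right (hfD k) (pow_nonneg hc20 r)
          rw [mul_one] at hb1
          linarith
        · exact absurd (Fin.ext h) hkj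
        · rw [htri k j (Fin.lt_def.mpr h), mul_zero]
          exact mul_nonneg hD0 (pow_nonneg hc20 r)
      have h2a : ∑ k ∈ Finset.univ.erase j, (M ^ r) i k * M k j
          ≤ ((Finset.univ.erase j).card : ℝ) * (D * c2 ^ r) := by
        have := Finset.sum_le_sum hterm
        rwa [Finset.sum_const, nsmul_eq_mul] at this
      have hcard : ((Finset.univ.erase j).card : ℝ) ≤ (s + 1 : ℝ) := by
        have h := Finset.card_erase_le (s := (Finset.univ : Finset (Fin (s + 1)))) (a := j)
        have h2 : (Finset.univ : Finset (Fin (s + 1))).card = s + 1 := by simp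
        rw [h2] at h
        exact_mod_cast h
      have h2 : ∑ k ∈ Finset.univ.erase j, (M ^ r) i k * M k j ≤ D' * c2 ^ r := by
        have := mul_le_mul_of_nonneg_right hcard (mul_nonneg hD0 (pow_nonneg hc20 r))
        rw [hD'def]
        calc ∑ k ∈ Finset.univ.erase j, (M ^ r) i k * M k j
            ≤ ((Finset.univ.erase j).card : ℝ) * (D * c2 ^ r) := h2a
          _ ≤ (s + 1 : ℝ) * (D * c2 ^ r) := this
          _ = (s + 1 : ℝ) * D * c2 ^ r := by ring
      linarith
    refine ⟨max 1 (D' / (c2 - c)), le_trans zero_le_one (le_max_left _ _), ?_⟩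
    set C := max 1 (D' / (c2 - c)) with hCdef
    have hC1 : (1 : ℝ) ≤ C := le_max_left _ _
    have hC0 : (0 : ℝ) ≤ C := le_trans zero_le_one hC1
    have hCD : D' ≤ C * (c2 - c) := by
      have h := le_max_right 1 (D' / (c2 - c))
      calc D' = D' / (c2 - c) * (c2 - c) := by field_simp
        _ ≤ C * (c2 - c) := mul_le_mul_of_nonneg_right h (le_of_lt hsub)
    intro i r
    induction r with
    | zero =>
      simp only [pow_zero, Matrix.one_apply]
      rw [mul_one]
      split <;> linarith
    | succ r ih =>
      calc (M ^ (r + 1)) i j ≤ c * (M ^ r) i j + D' * c2 ^ r := hrec i r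
        _ ≤ c * (C * c2 ^ r) + (C * (c2 - c)) * c2 ^ r := by
            have := mul_le_mul_of_nonneg_left ih hc0
            have := mul_le_mul_of_nonneg_right hCD (pow_nonneg hc20 r)
            linarith
        _ = C * c2 ^ (r + 1) := by ring
  -- strong induction
  have key : ∀ (m : ℕ) (j : Fin (s + 1)), (j : ℕ) ≤ m → j ≠ L →
      ∃ C, 0 ≤ C ∧ ∀ i r, (M ^ r) i j ≤ C * c2 ^ r := by
    intro m
    induction m with
    | zero =>
      intro j hjm hj
      exact step j hj fun k hk => absurd (Nat.lt_of_lt_of_le hk hjm) (Nat.not_lt_zero _)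
    | succ m ih =>
      intro j hjm hj
      apply step j hj
      intro k hk
      have hkm : (k : ℕ) ≤ m := Nat.lt_succ_iff.mp (lt_of_lt_of_le hk hjm)
      have hkL : k ≠ L := by
        have hks : (k : ℕ) < s := lt_of_lt_of_le hk (Fin.is_le j)
        intro h
        rw [h, hLdef] at hks
        simp at hks
      exact ih k hkm hkL
  have hexj : ∀ j : Fin (s + 1), ∃ C : ℝ, 0 ≤ C ∧
      (j ≠ L → ∀ i r, (M ^ r) i j ≤ C * c2 ^ r) := by
    intro j
    by_cases hj : j = L
    · exact ⟨0, le_refl 0, fun h => absurd hj h⟩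
    · obtain ⟨C, h0, h⟩ := key s j (Fin.is_le j) hj
      exact ⟨C, h0, fun _ => h⟩
  choose K0 hK00 hK0b using hexj
  refine ⟨c2, hc20, hc21, ∑ j, K0 j, Finset.sum_nonneg fun j _ => hK00 j, ?_⟩
  intro i r j hj
  calc (M ^ r) i j ≤ K0 j * c2 ^ r := hK0b j hj i r
    _ ≤ (∑ j, K0 j) * c2 ^ r := by
        apply mul_le_mul_of_nonneg_right _ (pow_nonneg hc20 r)
        exact Finset.single_le_sum (fun k _ => hK00 k) (Finset.mem_univ j)


end Stmt17Aux

open Stmt17Aux Finset Filter in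
/-- For an upper-triangular row-stochastic matrix `M` with absorbing last state and all
other diagonal entries `< 1`, the matrix `M - 𝟙 eₛᵀ - I` is invertible and the expected
absorption time from state `1` is `((M - 𝟙 eₛᵀ - I)⁻¹)_{1,s} + 1`. -/
theorem stmt_17 (s : ℕ) (M : Matrix (Fin (s + 1)) (Fin (s + 1)) ℝ)
    (htri : ∀ i j, j < i → M i j = 0)
    (hnonneg : ∀ i j, 0 ≤ M i j)
    (hrow : ∀ i, ∑ j, M i j = 1)
    (habs : M (Fin.last s) (Fin.last s) = 1)
    (hdiag : ∀ i, i < Fin.last s → M i i < 1)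
    (N : Matrix (Fin (s + 1)) (Fin (s + 1)) ℝ)
    (hN : N = M - Matrix.of (fun _ j => if j = Fin.last s then (1 : ℝ) else 0) - 1) :
    IsUnit N ∧
    ∑' r : ℕ, (r : ℝ) * ((M ^ r) 0 (Fin.last s) - (M ^ (r - 1)) 0 (Fin.last s)) =
      N⁻¹ 0 (Fin.last s) + 1 := by
  classical
  have hNentry : ∀ i j, N i j =
      M i j - (if j = Fin.last s then (1 : ℝ) else 0) - (if i = j then (1 : ℝ) else 0) := by
    intro i j
    rw [hN]
    simp [Matrix.sub_apply, Matrix.one_apply]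
  -- invertibility
  have hNtri : N.BlockTriangular id := by
    intro i j hij
    simp only [id] at hij
    have h2 : j ≠ Fin.last s := Fin.lt_last_iff_ne_last.mp (lt_of_lt_of_le hij (Fin.le_last i))
    rw [hNentry, htri i j hij, if_neg h2, if_neg (ne_of_gt hij)]
    ring
  have hdet : N.det = ∏ i, N i i := Matrix.det_of_upperTriangular hNtri
  have hdiagN : ∀ i, N i i ≠ 0 := by
    intro i
    rw [hNentry, if_pos rfl]
    by_cases hi : i = Fin.last s
    · rw [if_pos hi, hi, habs]; norm_num
    · rw [if_neg hi]
      have := hdiag i (Fin.lt_last_iff_ne_last.mpr hi)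
      intro h
      have : M i i = 1 := by linarith
      linarith
  have hdetne : N.det ≠ 0 := by
    rw [hdet]
    exact Finset.prod_ne_zero_iff.mpr fun i _ => hdiagN i
  have hUnit : IsUnit N := (Matrix.isUnit_iff_isUnit_det N).mpr (isUnit_iff_ne_zero.mpr hdetne)
  refine ⟨hUnit, ?_⟩
  -- analytic part
  obtain ⟨c2, hc20, hc21, K, hK0, hKb⟩ := colbound htri hnonneg hrow hdiag
  set L := Fin.last s with hLdef
  set g : Fin (s + 1) → ℕ → ℝ := fun i r => ∑ j ∈ Finset.univ.erase L, (M ^ r) i j with hgdef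
  have hg_nonneg : ∀ i r, 0 ≤ g i r := fun i r =>
    Finset.sum_nonneg fun j _ => matpow_nonneg hnonneg r i j
  have hg_bound : ∀ i r, g i r ≤ ((s : ℝ) + 1) * K * c2 ^ r := by
    intro i r
    have hterm : ∀ j ∈ Finset.univ.erase L, (M ^ r) i j ≤ K * c2 ^ r := fun j hj =>
      hKb i r j (Finset.ne_of_mem_erase hj)
    have h1 := Finset.sum_le_sum hterm
    rw [Finset.sum_const, nsmul_eq_mul] at h1
    have hcard : ((Finset.univ.erase L).card : ℝ) ≤ (s : ℝ) + 1 := by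
      have h := Finset.card_erase_le (s := (Finset.univ : Finset (Fin (s + 1)))) (a := L)
      have h2 : (Finset.univ : Finset (Fin (s + 1))).card = s + 1 := by simp
      rw [h2] at h
      exact_mod_cast h
    calc g i r ≤ ((Finset.univ.erase L).card : ℝ) * (K * c2 ^ r) := h1
      _ ≤ ((s : ℝ) + 1) * (K * c2 ^ r) :=
          mul_le_mul_of_nonneg_right hcard (mul_nonneg hK0 (pow_nonneg hc20 r))
      _ = ((s : ℝ) + 1) * K * c2 ^ r := by ring
  have hg_row : ∀ i r, (M ^ r) i L + g i r = 1 := by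
    intro i r
    rw [hgdef]
    rw [Finset.add_sum_erase _ _ (Finset.mem_univ L)]
    exact matpow_row hrow r i
  have hgL : ∀ r, g L r = 0 := by
    intro r
    apply Finset.sum_eq_zero
    intro j hj
    exact matpow_tri htri r L j (Fin.lt_last_iff_ne_last.mpr (Finset.ne_of_mem_erase hj))
  have hg0 : ∀ i, g i 0 = if i = L then 0 else 1 := by
    intro i
    by_cases hi : i = L
    · rw [if_pos hi, hi, hgL 0]
    · rw [if_neg hi, hgdef]
      simp only [pow_zero, Matrix.one_apply]
      rw [Finset.sum_ite_eq]
      simp [hi]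
  have hgrec : ∀ i r, g i (r + 1) = ∑ k, M i k * g k r := by
    intro i r
    rw [hgdef]
    simp only [pow_succ', Matrix.mul_apply]
    rw [Finset.sum_comm]
    exact Finset.sum_congr rfl fun k _ => by rw [Finset.mul_sum]
  -- summability
  have hbnd : Summable (fun r : ℕ => ((r : ℝ) + 1) * (((s : ℝ) + 1) * K * c2 ^ r)) := by
    have habs2 : ‖c2‖ < 1 := by rwa [Real.norm_eq_abs, abs_of_nonneg hc20]
    have h1 : Summable (fun r : ℕ => (r : ℝ) * c2 ^ r) := by
      simpa using summable_pow_mul_geometric_of_norm_lt_one 1 habs2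
    have h2 : Summable (fun r : ℕ => c2 ^ r) := summable_geometric_of_norm_lt_one habs2
    have := (h1.add h2).mul_left (((s : ℝ) + 1) * K)
    apply this.congr
    intro r
    ring
  have hsum2 : ∀ i, Summable (fun r : ℕ => ((r : ℝ) + 1) * g i r) := by
    intro i
    apply Summable.of_nonneg_of_le _ _ hbnd
    · intro r
      exact mul_nonneg (by positivity) (hg_nonneg i r)
    · intro r
      exact mul_le_mul_of_nonneg_left (hg_bound i r) (by positivity)
  have hsum : ∀ i, Summable (g i) := by
    intro i
    apply Summable.of_nonneg_of_le (hg_nonneg i) _ (hsum2 i)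
    intro r
    nlinarith [hg_nonneg i r, Nat.cast_nonneg (α := ℝ) r]
  have hsum1 : ∀ i, Summable (fun r : ℕ => (r : ℝ) * g i r) := by
    intro i
    apply Summable.of_nonneg_of_le _ _ (hsum2 i)
    · intro r
      exact mul_nonneg (Nat.cast_nonneg r) (hg_nonneg i r)
    · intro r
      nlinarith [hg_nonneg i r, Nat.cast_nonneg (α := ℝ) r]
  set T : Fin (s + 1) → ℝ := fun i => ∑' r, g i r with hTdef
  have hTL : T L = 0 := by
    rw [hTdef]
    simp only [hgL]
    exact tsum_zero
  have hMT : ∀ i, ∑ k, M i k * T k = T i - g i 0 := by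
    intro i
    have e1 : ∑ k, M i k * T k = ∑ k, ∑' r, M i k * g k r := by
      apply Finset.sum_congr rfl
      intro k _
      rw [tsum_mul_left]
    have e2 : ∑ k, ∑' r, M i k * g k r = ∑' r, ∑ k, M i k * g k r :=
      (Summable.tsum_finsetSum fun k _ => (hsum k).mul_left (M i k)).symm
    have e3 : (∑' r, ∑ k, M i k * g k r) = ∑' r, g i (r + 1) := by
      apply tsum_congr
      intro r
      rw [hgrec i r]
    have e4 : T i = g i 0 + ∑' r, g i (r + 1) := Summable.tsum_eq_zero_add (hsum i)
    rw [e1, e2, e3]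
    linarith
  -- the inverse entry
  set v : Fin (s + 1) → ℝ := fun j => T j - 1 with hvdef
  have hNv : N.mulVec v = fun i => if i = L then 1 else 0 := by
    funext i
    have e1 : ∀ j, N i j * v j =
        M i j * T j - M i j - (if j = L then T j - 1 else 0)
          - (if i = j then T j - 1 else 0) := by
      intro j
      rw [hNentry]
      by_cases h1 : j = L
      · subst h1
        by_cases h2 : i = L
        · subst h2
          simp [hvdef]
          try ring
        · simp [hvdef, h2]
          try ring
      · by_cases h2 : i = j
        · subst h2
          simp [hvdef, h1]
          try ring
        · simp [hvdef, h1, h2]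
          try ring
    rw [Matrix.mulVec, dotProduct]
    simp only [e1]
    rw [Finset.sum_sub_distrib, Finset.sum_sub_distrib, Finset.sum_sub_distrib]
    rw [Finset.sum_ite_eq' Finset.univ L (fun j => T j - 1)]
    rw [Finset.sum_ite_eq Finset.univ i (fun j => T j - 1)]
    rw [hMT i, hrow i, hTL]
    simp only [Finset.mem_univ, if_true]
    rw [hg0 i]
    by_cases hi : i = L
    · rw [if_pos hi, if_pos hi, hi, hTL]; ring
    · rw [if_neg hi, if_neg hi]; ring
  have hNinv : N⁻¹ 0 L = T 0 - 1 := by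
    have hdet' : IsUnit N.det := isUnit_iff_ne_zero.mpr hdetne
    have h1 : N⁻¹.mulVec (N.mulVec v) = v := by
      rw [Matrix.mulVec_mulVec, Matrix.nonsing_inv_mul N hdet', Matrix.one_mulVec]
    have h2 : N⁻¹.mulVec (fun i => if i = L then (1 : ℝ) else 0) 0 = N⁻¹ 0 L := by
      rw [Matrix.mulVec, dotProduct]
      simp [mul_ite, Finset.sum_ite_eq' Finset.univ L (fun j => N⁻¹ 0 j)]
    rw [← h2, ← hNv, h1]
  -- the telescoping sum
  set t : ℕ → ℝ := fun r => (r : ℝ) * ((M ^ r) 0 L - (M ^ (r - 1)) 0 L) with htdef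
  have ht_eq : ∀ r : ℕ, t r = (r : ℝ) * (g 0 (r - 1) - g 0 r) := by
    intro r
    show (r : ℝ) * ((M ^ r) 0 L - (M ^ (r - 1)) 0 L) = (r : ℝ) * (g 0 (r - 1) - g 0 r)
    have h1 : (M ^ r) 0 L = 1 - g 0 r := by linarith [hg_row 0 r]
    have h2 : (M ^ (r - 1)) 0 L = 1 - g 0 (r - 1) := by linarith [hg_row 0 (r - 1)]
    rw [h1, h2]
    ring
  have hshift : Summable (fun r : ℕ => (r : ℝ) * g 0 (r - 1)) := by
    apply (summable_nat_add_iff 1).mp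
    apply (hsum2 0).congr
    intro n
    rw [Nat.add_sub_cancel]
    push_cast
    ring
  have ht : Summable t := by
    apply Summable.of_norm_bounded (hshift.add (hsum1 0))
    intro r
    rw [ht_eq r, Real.norm_eq_abs, abs_mul, abs_of_nonneg (Nat.cast_nonneg r)]
    have h1 := hg_nonneg 0 (r - 1)
    have h2 := hg_nonneg 0 r
    have h3 : |g 0 (r - 1) - g 0 r| ≤ g 0 (r - 1) + g 0 r :=
      abs_le.mpr ⟨by linarith, by linarith⟩
    have h4 : (0 : ℝ) ≤ (r : ℝ) := Nat.cast_nonneg r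
    nlinarith
  have hpart : ∀ n : ℕ, ∑ r ∈ Finset.range n, t r =
      (∑ r ∈ Finset.range n, g 0 r) - (n : ℝ) * g 0 (n - 1) := by
    intro n
    induction n with
    | zero => simp
    | succ n ih =>
      rw [Finset.sum_range_succ, ih, ht_eq n, Finset.sum_range_succ, Nat.add_sub_cancel]
      push_cast
      ring
  have hlim1 : Tendsto (fun n => ∑ r ∈ Finset.range n, g 0 r) atTop (nhds (T 0)) :=
    (hsum 0).hasSum.tendsto_sum_nat
  have hlim2 : Tendsto (fun n : ℕ => (n : ℝ) * g 0 (n - 1)) atTop (nhds 0) := by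
    have hu : Tendsto (fun n : ℕ => ((n : ℝ) + 1) * g 0 n) atTop (nhds 0) :=
      (hsum2 0).tendsto_atTop_zero
    have hsub : Tendsto (fun n : ℕ => n - 1) atTop atTop := by
      apply tendsto_atTop_atTop.mpr
      intro b
      exact ⟨b + 1, fun a ha => by omega⟩
    have hcomp := hu.comp hsub
    apply hcomp.congr'
    rw [Filter.EventuallyEq, eventually_atTop]
    refine ⟨1, fun n hn => ?_⟩
    simp only [Function.comp]
    have h1 : (n - 1) + 1 = n := Nat.succ_pred_eq_of_pos hn
    have h2 : ((n - 1 : ℕ) : ℝ) + 1 = (n : ℝ) := by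
      exact_mod_cast h1
    rw [h2]
  have hlim : Tendsto (fun n => ∑ r ∈ Finset.range n, t r) atTop (nhds (T 0)) := by
    have := hlim1.sub hlim2
    rw [sub_zero] at this
    apply this.congr
    intro n
    rw [hpart n]
  have htsum : ∑' r, t r = T 0 := tendsto_nhds_unique ht.hasSum.tendsto_sum_nat hlim
  rw [htsum, hNinv]
  ring
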